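/- Let P be a rooted forest on [n] and π a linear extension of P. Then π ∂̂_i (applying extended promotion with seed at the position of letter i) equals the linear extension obtained from π by moving the letter i to position n and reordering all letters j ≽ i in P increasingly along their (unique) chain order. -/

import Mathlib

open scoped Classical

/-- A partial order on `Fin n`, given as a plain structure (so that the standard
linear order on `Fin n` is unaffected). -/
structure FinPoset (n : ℕ) where
  le : Fin n → Fin n → Prop
  le_refl : ∀ a, le a a
  le_trans : ∀ a b c, le a b → le b c → le a c
  le_antisymm : ∀ a b, le a b → le b a → a = b

/-- The strict order associated to a `FinPoset`. -/
def FinPoset.lt {n : ℕ} (P : FinPoset n) (a b : Fin n) : Prop :=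
  P.le a b ∧ a ≠ b

variable {n : ℕ}

/-- `tauOp P i π` is the operator `τ_i` (0-indexed) acting on the permutation `π`
(in one-line notation `π k` is the entry at position `k`): it swaps the entries at
positions `i` and `i+1` if they are incomparable in `P`, else fixes `π`. -/
noncomputable def tauOp (P : FinPoset n) (i : ℕ) (π : Equiv.Perm (Fin n)) :
    Equiv.Perm (Fin n) :=
  if h : i + 1 < n then
    if ¬ P.le (π ⟨i, Nat.lt_of_succ_lt h⟩) (π ⟨i + 1, h⟩) ∧
        ¬ P.le (π ⟨i + 1, h⟩) (π ⟨i, Nat.lt_of_succ_lt h⟩) then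
      π * Equiv.swap ⟨i, Nat.lt_of_succ_lt h⟩ ⟨i + 1, h⟩
    else π
  else π

/-- `π` is a linear extension of the poset `P` on `Fin n`: if `a ≺ b` in `P`
then the position of `a` precedes the position of `b`. -/
def IsLinearExtension (P : FinPoset n) (π : Equiv.Perm (Fin n)) : Prop :=
  ∀ a b : Fin n, P.lt a b → π.symm a < π.symm b

/-- The extended promotion operator `∂_j = τ_j τ_{j+1} ⋯ τ_{n-2}` (0-indexed),
applied on the right to `π`. -/
noncomputable def promoOp (P : FinPoset n) (j : ℕ) (π : Equiv.Perm (Fin n)) :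
    Equiv.Perm (Fin n) :=
  (List.range (n - 1 - j)).foldl (fun σ k => tauOp P (j + k) σ) π

/-- `y` covers `x` in `P`. -/
def IsCover (P : FinPoset n) (x y : Fin n) : Prop :=
  P.lt x y ∧ ∀ z : Fin n, P.lt x z → P.lt z y → False

/-- `P` is a rooted forest: every element has at most one successor (cover above). -/
def IsRootedForest (P : FinPoset n) : Prop :=
  ∀ x y z : Fin n, IsCover P x y → IsCover P x z → y = z

/-- The word obtained from `π` (one-line notation) by removing the letter `i` and
appending it at the last position. -/
noncomputable def movedWord (π : Equiv.Perm (Fin n)) (i : Fin n) (k : Fin n) : Fin n :=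
  if (k : ℕ) < ((π.symm i : Fin n) : ℕ) then π k
  else if h : (k : ℕ) + 1 < n then π ⟨(k : ℕ) + 1, h⟩ else i

/-! ### Auxiliary lemmas -/

lemma pos_mono {P : FinPoset n} {π : Equiv.Perm (Fin n)} (hπ : IsLinearExtension P π)
    {a b : Fin n} (h : P.le a b) : π.symm a ≤ π.symm b := by
  rcases eq_or_ne a b with rfl | hne
  · exact le_rfl
  · exact (hπ a b ⟨h, hne⟩).le

lemma chain_above_aux {P : FinPoset n} (hP : IsRootedForest P) {π : Equiv.Perm (Fin n)}
    (hπ : IsLinearExtension P π) :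
    ∀ N : ℕ, ∀ a b c : Fin n, (Finset.univ.filter (fun z => P.lt a z)).card ≤ N →
      P.le a b → P.le a c → P.le b c ∨ P.le c b := by
  intro N
  induction N with
  | zero =>
    intro a b c hcard hb hc
    rcases eq_or_ne a b with rfl | hab
    · exact Or.inl hc
    · exfalso
      have : b ∈ Finset.univ.filter (fun z => P.lt a z) := by
        simp only [Finset.mem_filter, Finset.mem_univ, true_and]; exact ⟨hb, hab⟩
      have := Finset.card_pos.mpr ⟨b, this⟩
      omega
  | succ N ih =>
    intro a b c hcard hb hc
    rcases eq_or_ne a b with rfl | hab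
    · exact Or.inl hc
    rcases eq_or_ne a c with rfl | hac
    · exact Or.inr hb
    -- find the cover of `a` below `b`
    have key : ∀ d : Fin n, P.le a d → a ≠ d →
        ∃ m : Fin n, IsCover P a m ∧ P.le m d := by
      intro d hd had
      set S : Finset (Fin n) := Finset.univ.filter (fun z => P.lt a z ∧ P.le z d) with hS
      have hdS : d ∈ S := by
        simp only [hS, Finset.mem_filter, Finset.mem_univ, true_and]; exact ⟨⟨hd, had⟩, P.le_refl d⟩
      obtain ⟨m, hmS, hmin⟩ := Finset.exists_min_image S (fun z => π.symm z) ⟨d, hdS⟩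
      simp only [hS, Finset.mem_filter, Finset.mem_univ, true_and] at hmS
      refine ⟨m, ⟨hmS.1, ?_⟩, hmS.2⟩
      intro z hz1 hz2
      have hzS : z ∈ S := by
        simp only [hS, Finset.mem_filter, Finset.mem_univ, true_and]
        exact ⟨hz1, P.le_trans _ _ _ hz2.1 hmS.2⟩
      have h1 := hmin z hzS
      have h2 := hπ z m hz2
      omega
    obtain ⟨m, hmcov, hmb⟩ := key b hb hab
    obtain ⟨m', hmcov', hmc⟩ := key c hc hac
    have : m = m' := hP a m m' hmcov hmcov'
    subst this
    have ham : a ≠ m := hmcov.1.2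
    have hsub : (Finset.univ.filter (fun z => P.lt m z)) ⊂
        (Finset.univ.filter (fun z => P.lt a z)) := by
      constructor
      · intro z hz
        simp only [Finset.mem_filter, Finset.mem_univ, true_and] at hz ⊢
        refine ⟨P.le_trans _ _ _ hmcov.1.1 hz.1, ?_⟩
        rintro rfl
        exact ham (P.le_antisymm _ _ hmcov.1.1 hz.1)
      · intro hsub'
        have : m ∈ Finset.univ.filter (fun z => P.lt a z) := by
          simp only [Finset.mem_filter, Finset.mem_univ, true_and]; exact ⟨hmcov.1.1, ham⟩
        have := hsub' this
        simp only [Finset.mem_filter, Finset.mem_univ, true_and] at this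
        exact this.2 rfl
    have hlt := Finset.card_lt_card hsub
    exact ih m b c (by omega) hmb hmc

lemma chain_above {P : FinPoset n} (hP : IsRootedForest P) {π : Equiv.Perm (Fin n)}
    (hπ : IsLinearExtension P π) {a b c : Fin n} (hb : P.le a b) (hc : P.le a c) :
    P.le b c ∨ P.le c b :=
  chain_above_aux hP hπ _ a b c le_rfl hb hc

/-- Position of the largest element of the chain above `i` occurring at position `≤ K`. -/
noncomputable def mpos (P : FinPoset n) (i : Fin n) (π : Equiv.Perm (Fin n)) (K : ℕ) :
    Fin n :=
  ((Finset.univ.filter (fun m : Fin n => (m : ℕ) ≤ K ∧ P.le i (π m))).max).getD (π.symm i)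

lemma mpos_spec (P : FinPoset n) (i : Fin n) (π : Equiv.Perm (Fin n)) (K : ℕ)
    (hK : ((π.symm i : Fin n) : ℕ) ≤ K) :
    ((mpos P i π K : ℕ) ≤ K ∧ P.le i (π (mpos P i π K))) ∧
      ∀ m : Fin n, (m : ℕ) ≤ K → P.le i (π m) → m ≤ mpos P i π K := by
  set S := Finset.univ.filter (fun m : Fin n => (m : ℕ) ≤ K ∧ P.le i (π m)) with hS
  have hmem : π.symm i ∈ S := by simp [hS, hK, P.le_refl]
  obtain ⟨m, hm⟩ := Finset.max_of_nonempty ⟨_, hmem⟩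
  have hmm : mpos P i π K = m := by rw [mpos, ← hS, hm]; rfl
  have hmS := Finset.mem_of_max hm
  simp only [hS, Finset.mem_filter, Finset.mem_univ, true_and] at hmS
  rw [hmm]
  refine ⟨hmS, ?_⟩
  intro m' h1 h2
  have : m' ∈ S := by simp [hS, h1, h2]
  have := Finset.le_max this
  rw [hm] at this
  exact_mod_cast this

lemma mpos_eq (P : FinPoset n) (i : Fin n) (π : Equiv.Perm (Fin n)) (K : ℕ)
    (hK : ((π.symm i : Fin n) : ℕ) ≤ K) (m : Fin n) (h1 : (m : ℕ) ≤ K)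
    (h2 : P.le i (π m)) (h3 : ∀ m' : Fin n, (m' : ℕ) ≤ K → P.le i (π m') → m' ≤ m) :
    mpos P i π K = m := by
  obtain ⟨⟨ha, hb⟩, hc⟩ := mpos_spec P i π K hK
  exact le_antisymm (h3 _ ha hb) (hc m h1 h2)

lemma mpos_base (P : FinPoset n) (i : Fin n) {π : Equiv.Perm (Fin n)}
    (hπ : IsLinearExtension P π) :
    mpos P i π ((π.symm i : Fin n) : ℕ) = π.symm i := by
  refine mpos_eq P i π _ le_rfl _ le_rfl (by simp [P.le_refl]) ?_
  intro m' h1 h2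
  exact Fin.le_def.mpr h1

lemma mpos_succ_mem (P : FinPoset n) (i : Fin n) {π : Equiv.Perm (Fin n)} (K : ℕ)
    (hK : ((π.symm i : Fin n) : ℕ) ≤ K) (h : K + 1 < n)
    (hU : P.le i (π ⟨K + 1, h⟩)) : mpos P i π (K + 1) = ⟨K + 1, h⟩ := by
  refine mpos_eq P i π _ (by omega) _ le_rfl hU ?_
  intro m' h1 _
  exact Fin.le_def.mpr h1

lemma mpos_succ_not_mem (P : FinPoset n) (i : Fin n) {π : Equiv.Perm (Fin n)} (K : ℕ)
    (hK : ((π.symm i : Fin n) : ℕ) ≤ K) (h : K + 1 < n)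
    (hU : ¬ P.le i (π ⟨K + 1, h⟩)) : mpos P i π (K + 1) = mpos P i π K := by
  obtain ⟨⟨ha, hb⟩, hc⟩ := mpos_spec P i π K hK
  refine mpos_eq P i π _ (by omega) _ (by omega) hb ?_
  intro m' h1 h2
  have hne : m' ≠ ⟨K + 1, h⟩ := by rintro rfl; exact hU h2
  have : (m' : ℕ) ≠ K + 1 := by
    intro he; exact hne (Fin.ext he)
  exact hc m' (by omega) h2

lemma le_of_pos_le {P : FinPoset n} (hP : IsRootedForest P) {π : Equiv.Perm (Fin n)}
    (hπ : IsLinearExtension P π) {i u v : Fin n} (hu : P.le i u) (hv : P.le i v)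
    (h : π.symm u ≤ π.symm v) : P.le u v := by
  rcases chain_above hP hπ hu hv with h' | h'
  · exact h'
  · have := pos_mono hπ h'
    have : π.symm u = π.symm v := le_antisymm h this
    have : u = v := π.symm.injective this
    rw [this]; exact P.le_refl v

noncomputable def sig (P : FinPoset n) (p : ℕ) (π : Equiv.Perm (Fin n)) (t : ℕ) :
    Equiv.Perm (Fin n) :=
  (List.range t).foldl (fun σ k => tauOp P (p + k) σ) π

lemma sig_succ (P : FinPoset n) (p : ℕ) (π : Equiv.Perm (Fin n)) (t : ℕ) :
    sig P p π (t + 1) = tauOp P (p + t) (sig P p π t) := by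
  rw [sig, List.range_succ, List.foldl_append]; rfl

lemma promo_eq_sig (P : FinPoset n) (p : ℕ) (π : Equiv.Perm (Fin n)) :
    promoOp P p π = sig P p π (n - 1 - p) := rfl

lemma sig_invariant {P : FinPoset n} (hP : IsRootedForest P) (i : Fin n)
    {π : Equiv.Perm (Fin n)} (hπ : IsLinearExtension P π) (t : ℕ)
    (ht : ((π.symm i : Fin n) : ℕ) + t ≤ n - 1) :
    ∀ k : Fin n,
      (((k : ℕ) < ((π.symm i : Fin n) : ℕ) ∨ ((π.symm i : Fin n) : ℕ) + t < (k : ℕ)) →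
        sig P ((π.symm i : Fin n) : ℕ) π t k = π k) ∧
      ((k : ℕ) = ((π.symm i : Fin n) : ℕ) + t →
        sig P ((π.symm i : Fin n) : ℕ) π t k = π (mpos P i π (k : ℕ))) ∧
      (∀ h : (k : ℕ) + 1 < n, ((π.symm i : Fin n) : ℕ) ≤ (k : ℕ) →
          (k : ℕ) < ((π.symm i : Fin n) : ℕ) + t →
        sig P ((π.symm i : Fin n) : ℕ) π t k =
          if P.le i (π ⟨(k : ℕ) + 1, h⟩) then π (mpos P i π (k : ℕ))
          else π ⟨(k : ℕ) + 1, h⟩) := by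
  set p : ℕ := ((π.symm i : Fin n) : ℕ) with hp
  have hn : 0 < n := i.pos
  induction t with
  | zero =>
    intro k
    refine ⟨fun _ => rfl, fun hk => ?_, fun h h1 h2 => by omega⟩
    have hkp : k = π.symm i := Fin.ext (by omega)
    have : mpos P i π (k : ℕ) = π.symm i := by
      rw [hkp]; exact mpos_base P i hπ
    rw [this, hkp]
    rfl
  | succ t ih =>
    have ht' : p + t ≤ n - 1 := by omega
    have ih' := ih ht'
    have hj1 : p + t + 1 < n := by omega
    have hjlt : p + t < n := by omega
    set j : Fin n := ⟨p + t, hjlt⟩ with hj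
    set j' : Fin n := ⟨p + t + 1, hj1⟩ with hj'
    have hσj : sig P p π t j = π (mpos P i π (p + t)) := (ih' j).2.1 rfl
    have hσj' : sig P p π t j' = π j' := (ih' j').1 (Or.inr (by simp [hj']))
    have hspec := mpos_spec P i π (p + t) (by omega)
    -- the value at position p+t is in the chain above i
    have hcur : P.le i (π (mpos P i π (p + t))) := hspec.1.2
    have hcurpos : ((mpos P i π (p + t) : Fin n) : ℕ) ≤ p + t := hspec.1.1
    have htau : sig P p π (t + 1) = tauOp P (p + t) (sig P p π t) := sig_succ P p π t
    by_cases hU : P.le i (π j')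
    · -- no swap: the two entries are comparable
      have hcomp : P.le (sig P p π t j) (sig P p π t j') := by
        rw [hσj, hσj']
        rcases chain_above hP hπ hcur hU with h' | h'
        · exact h'
        · have := pos_mono hπ h'
          simp only [Equiv.symm_apply_apply] at this
          have h2 : (j' : ℕ) ≤ (mpos P i π (p + t) : ℕ) := this
          simp only [hj'] at h2
          omega
      have hfix : sig P p π (t + 1) = sig P p π t := by
        rw [htau, tauOp, dif_pos hj1]
        rw [if_neg]
        intro ⟨h1, h2⟩
        exact h1 hcomp
      intro k
      refine ⟨fun hk => ?_, fun hk => ?_, fun h h1 h2 => ?_⟩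
      · rw [hfix]; exact (ih' k).1 (by omega)
      · -- k = p + t + 1
        have hkj' : k = j' := Fin.ext (by simp [hj']; omega)
        rw [hfix, hkj', hσj']
        have : mpos P i π ((j' : ℕ)) = j' := by
          have : (j' : ℕ) = (p + t) + 1 := rfl
          rw [this]
          exact mpos_succ_mem P i (p + t) (by omega) hj1 hU
        rw [this]
      · -- p ≤ k < p + t + 1
        rw [hfix]
        rcases Nat.lt_or_ge (k : ℕ) (p + t) with hk' | hk'
        · exact (ih' k).2.2 h h1 hk'
        · have hkj : (k : ℕ) = p + t := by omega
          have hkk : k = j := Fin.ext (by simp [hj, hkj])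
          have : π ⟨(k : ℕ) + 1, h⟩ = π j' := by congr 1; exact Fin.ext (by simp [hj', hkj])
          rw [if_pos (by rw [this]; exact hU), hkk, hσj]
    · -- swap: the two entries are incomparable
      have hswap : sig P p π (t + 1) = sig P p π t * Equiv.swap j j' := by
        rw [htau, tauOp, dif_pos hj1]
        rw [if_pos]
        constructor
        · rw [hσj, hσj']
          intro hle
          exact hU (P.le_trans _ _ _ hcur hle)
        · rw [hσj, hσj']
          intro hle
          have := pos_mono hπ hle
          simp only [Equiv.symm_apply_apply] at this
          have h2 : (j' : ℕ) ≤ (mpos P i π (p + t) : ℕ) := this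
          simp only [hj'] at h2
          omega
      have hmpos' : mpos P i π (p + t + 1) = mpos P i π (p + t) :=
        mpos_succ_not_mem P i (p + t) (by omega) hj1 hU
      intro k
      have hjv : (j : ℕ) = p + t := rfl
      have hj'v : (j' : ℕ) = p + t + 1 := rfl
      by_cases hkj : k = j
      · refine ⟨fun hk => by exfalso; subst hkj; omega, fun hk => ?_, fun h h1 h2 => ?_⟩
        · exfalso; subst hkj; omega
        · subst hkj
          rw [hswap]
          have : (sig P p π t * Equiv.swap j j') j = sig P p π t j' := by
            simp [Equiv.Perm.mul_apply, Equiv.swap_apply_left]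
          rw [this, hσj']
          have hne : ¬ P.le i (π ⟨(j : ℕ) + 1, h⟩) := by
            have : (⟨(j : ℕ) + 1, h⟩ : Fin n) = j' := Fin.ext (by simp [hj, hj'])
            rw [this]; exact hU
          rw [if_neg hne]
      · by_cases hkj' : k = j'
        · refine ⟨fun hk => by exfalso; subst hkj'; omega, fun hk => ?_, fun h h1 h2 => ?_⟩
          · subst hkj'
            rw [hswap]
            have : (sig P p π t * Equiv.swap j j') j' = sig P p π t j := by
              simp [Equiv.Perm.mul_apply, Equiv.swap_apply_right]
            rw [this, hσj]
            have : (j' : ℕ) = p + t + 1 := rfl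
            rw [this, hmpos']
          · exfalso; subst hkj'; omega
        · have hfixk : sig P p π (t + 1) k = sig P p π t k := by
            rw [hswap]
            simp [Equiv.Perm.mul_apply, Equiv.swap_apply_of_ne_of_ne hkj hkj']
          refine ⟨fun hk => ?_, fun hk => ?_, fun h h1 h2 => ?_⟩
          · rw [hfixk]
            refine (ih' k).1 ?_
            rcases hk with hk | hk
            · exact Or.inl hk
            · right
              omega
          · exfalso
            exact hkj' (Fin.ext (show (k : ℕ) = p + t + 1 by omega))
          · rw [hfixk]
            have hk' : (k : ℕ) < p + t := by
              rcases Nat.lt_or_ge (k : ℕ) (p + t) with h' | h'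
              · exact h'
              · exfalso
                have : (k : ℕ) = p + t := by omega
                exact hkj (Fin.ext (by simp [hj, this]))
            exact (ih' k).2.2 h h1 hk'

/-- Let `P` be a rooted forest and `π` a linear extension of `P`.  Then
`π ∂̂_i = π ∂_{π⁻¹(i)}` is the linear extension obtained from `π` by moving the letter
`i` to the last position and reordering the letters `j ≽ i` increasingly along their
chain: at positions where the moved word carries a letter not above `i`, `π ∂̂_i`
agrees with the moved word, and the positions carrying letters above `i` are filled
with those letters in increasing `P`-order (the `r`-th such position gets the `r`-th
smallest element of the chain `{j : j ≽ i}`). -/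
theorem promo_moves_letter_rooted_forest (P : FinPoset n) (hP : IsRootedForest P)
    (i : Fin n) (π : Equiv.Perm (Fin n)) (hπ : IsLinearExtension P π) (k : Fin n) :
    (movedWord π i k ∉ Finset.univ.filter (fun j => P.le i j) →
        promoOp P ((π.symm i : ℕ)) π k = movedWord π i k) ∧
    (movedWord π i k ∈ Finset.univ.filter (fun j => P.le i j) →
        promoOp P ((π.symm i : ℕ)) π k ∈ Finset.univ.filter (fun j => P.le i j) ∧
        ((Finset.Iic k).filter (fun k' => movedWord π i k' ∈
            Finset.univ.filter (fun j => P.le i j))).card =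
          ((Finset.univ.filter (fun j => P.le i j)).filter
            (fun v => P.le v (promoOp P ((π.symm i : ℕ)) π k))).card) := by
  set p : ℕ := ((π.symm i : Fin n) : ℕ) with hp
  have hn : 0 < n := i.pos
  have hplt : p < n := (π.symm i).isLt
  have hinv := sig_invariant hP i hπ (n - 1 - p) (by omega)
  have hpt : p + (n - 1 - p) = n - 1 := by omega
  -- positions of elements of the chain above i are ≥ p
  have hposge : ∀ m : Fin n, P.le i (π m) → p ≤ (m : ℕ) := by
    intro m hm
    have := pos_mono hπ hm
    have h2 : π.symm i ≤ m := by simpa using this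
    exact h2
  -- the key pointwise description of the result
  have hresult : ∀ k' : Fin n, promoOp P p π k' =
      if P.le i (movedWord π i k') then π (mpos P i π (k' : ℕ))
      else movedWord π i k' := by
    intro k'
    rw [promo_eq_sig]
    rcases Nat.lt_or_ge (k' : ℕ) p with hk | hk
    · have hmw : movedWord π i k' = π k' := by rw [movedWord, if_pos hk]
      rw [hmw, if_neg (fun hle => by have := hposge k' hle; omega)]
      exact (hinv k').1 (Or.inl hk)
    · rcases Nat.lt_or_ge ((k' : ℕ) + 1) n with hk1 | hk1
      · have hmw : movedWord π i k' = π ⟨(k' : ℕ) + 1, hk1⟩ := by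
          rw [movedWord, if_neg (by omega), dif_pos hk1]
        rw [hmw]
        have := (hinv k').2.2 hk1 hk (by omega)
        rw [this]
      · have hkn : (k' : ℕ) = n - 1 := by have := k'.isLt; omega
        have hmw : movedWord π i k' = i := by
          rw [movedWord, if_neg (by omega), dif_neg (by omega)]
        rw [hmw, if_pos (P.le_refl i)]
        exact (hinv k').2.1 (by omega)
  simp only [Finset.mem_filter, Finset.mem_univ, true_and]
  constructor
  · intro hnot
    rw [hresult k, if_neg hnot]
  · intro hmem
    have hpk : p ≤ (k : ℕ) := by
      by_contra hc
      push_neg at hc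
      rw [movedWord, if_pos hc] at hmem
      have := hposge k hmem
      omega
    have hspec := mpos_spec P i π (k : ℕ) hpk
    have hres : promoOp P p π k = π (mpos P i π (k : ℕ)) := by
      rw [hresult k, if_pos hmem]
    rw [hres]
    refine ⟨hspec.1.2, ?_⟩
    -- properties of members of the left-hand set
    have hmemL : ∀ k' : Fin n, k' ≤ k → P.le i (movedWord π i k') →
        p ≤ (k' : ℕ) ∧ P.le i (π (mpos P i π (k' : ℕ))) ∧
          (mpos P i π (k' : ℕ) : ℕ) ≤ (k' : ℕ) := by
      intro k' hk' hU
      have hpk' : p ≤ (k' : ℕ) := by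
        by_contra hc
        push_neg at hc
        rw [movedWord, if_pos hc] at hU
        have := hposge k' hU
        omega
      have := mpos_spec P i π (k' : ℕ) hpk'
      exact ⟨hpk', this.1.2, this.1.1⟩
    refine Finset.card_bij (fun k' _ => π (mpos P i π (k' : ℕ))) ?_ ?_ ?_
    · intro k' hk'
      simp only [Finset.mem_filter, Finset.mem_Iic, Finset.mem_univ, true_and] at hk' ⊢
      obtain ⟨hpk', hUk', hposk'⟩ := hmemL k' hk'.1 hk'.2
      refine ⟨hUk', ?_⟩
      -- mpos k' ≤ mpos k, then compare in the chain
      have hle : mpos P i π (k' : ℕ) ≤ mpos P i π (k : ℕ) :=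
        hspec.2 _ (by have := hk'.1; omega) hUk'
      refine le_of_pos_le hP hπ hUk' hspec.1.2 ?_
      simpa using hle
    · -- injectivity
      have key : ∀ k₁ k₂ : Fin n, k₁ ≤ k ∧ P.le i (movedWord π i k₁) →
          k₂ ≤ k ∧ P.le i (movedWord π i k₂) → (k₁ : ℕ) < (k₂ : ℕ) →
          (mpos P i π (k₁ : ℕ) : ℕ) < (mpos P i π (k₂ : ℕ) : ℕ) := by
        intro k₁ k₂ h₁ h₂ hlt
        obtain ⟨hpk₁, hU₁, hpos₁⟩ := hmemL k₁ h₁.1 h₁.2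
        obtain ⟨hpk₂, hU₂, hpos₂⟩ := hmemL k₂ h₂.1 h₂.2
        have hk₁n : (k₁ : ℕ) + 1 < n := by
          have := k₂.isLt; omega
        have hUk₁1 : P.le i (π ⟨(k₁ : ℕ) + 1, hk₁n⟩) := by
          have := h₁.2
          rw [movedWord, if_neg (by omega), dif_pos hk₁n] at this
          exact this
        have hspec₂ := mpos_spec P i π (k₂ : ℕ) hpk₂
        have := hspec₂.2 ⟨(k₁ : ℕ) + 1, hk₁n⟩ (by simpa using hlt) hUk₁1
        have h2 : (k₁ : ℕ) + 1 ≤ (mpos P i π (k₂ : ℕ) : ℕ) := this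
        omega
      intro k₁ hk₁ k₂ hk₂ heq
      simp only [Finset.mem_filter, Finset.mem_Iic, Finset.mem_univ, true_and] at hk₁ hk₂
      have heq' : mpos P i π (k₁ : ℕ) = mpos P i π (k₂ : ℕ) := π.injective heq
      by_contra hne
      rcases Nat.lt_or_ge (k₁ : ℕ) (k₂ : ℕ) with h | h
      · have := key k₁ k₂ hk₁ hk₂ h; omega
      · have h' : (k₂ : ℕ) < (k₁ : ℕ) := by
          rcases Nat.lt_or_ge (k₂ : ℕ) (k₁ : ℕ) with h' | h'
          · exact h'
          · exact absurd (Fin.ext (by omega : (k₁ : ℕ) = (k₂ : ℕ))) hne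
        have := key k₂ k₁ hk₂ hk₁ h'; omega
    · -- surjectivity
      intro v hv
      simp only [Finset.mem_filter, Finset.mem_univ, true_and] at hv
      obtain ⟨hUv, hvle⟩ := hv
      set m : Fin n := π.symm v with hm
      have hUm : P.le i (π m) := by rw [hm]; simpa using hUv
      have hmlek : (m : ℕ) ≤ (mpos P i π (k : ℕ) : ℕ) := by
        have := pos_mono hπ hvle
        simpa [hm] using this
      have hmk : (m : ℕ) ≤ (k : ℕ) := le_trans hmlek hspec.1.1
      set T : Finset (Fin n) := Finset.univ.filter
        (fun z : Fin n => (m : ℕ) < (z : ℕ) ∧ (z : ℕ) ≤ (k : ℕ) ∧ P.le i (π z)) with hT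
      rcases T.eq_empty_or_nonempty with hTe | hTne
      · -- v is the maximal chain element below position k; take k' = k
        have hmeq : mpos P i π (k : ℕ) = m := by
          have h1 : (mpos P i π (k : ℕ) : ℕ) ≤ (m : ℕ) := by
            by_contra hc
            push_neg at hc
            have : mpos P i π (k : ℕ) ∈ T := by
              simp only [hT, Finset.mem_filter, Finset.mem_univ, true_and]
              exact ⟨hc, hspec.1.1, hspec.1.2⟩
            rw [hTe] at this
            exact absurd this (Finset.notMem_empty _)
          exact Fin.ext (by omega)
        refine ⟨k, ?_, ?_⟩
        · simp only [Finset.mem_filter, Finset.mem_Iic, Finset.mem_univ, true_and]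
          exact ⟨le_rfl, hmem⟩
        · show π (mpos P i π (k : ℕ)) = v
          rw [hmeq, hm]; simp
      · obtain ⟨m', hm'T, hm'min⟩ := Finset.exists_min_image T (fun z => (z : ℕ)) hTne
        simp only [hT, Finset.mem_filter, Finset.mem_univ, true_and] at hm'T
        obtain ⟨hmm', hm'k, hUm'⟩ := hm'T
        have hpm : p ≤ (m : ℕ) := hposge m hUm
        have hm'n : (m' : ℕ) < n := m'.isLt
        refine ⟨⟨(m' : ℕ) - 1, by omega⟩, ?_, ?_⟩
        · simp only [Finset.mem_filter, Finset.mem_Iic, Finset.mem_univ, true_and]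
          constructor
          · exact Fin.le_def.mpr (by simp; omega)
          · have hh : ((⟨(m' : ℕ) - 1, by omega⟩ : Fin n) : ℕ) + 1 < n := by simp; omega
            rw [movedWord, if_neg (by simp; omega), dif_pos hh]
            have : (⟨((⟨(m' : ℕ) - 1, by omega⟩ : Fin n) : ℕ) + 1, hh⟩ : Fin n) = m' :=
              Fin.ext (by simp; omega)
            rw [this]
            exact hUm'
        · have hmeq : mpos P i π ((m' : ℕ) - 1) = m := by
            refine mpos_eq P i π _ (by omega) m (by omega) hUm ?_
            intro m'' h1 h2
            by_contra hc
            push_neg at hc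
            have hcc : (m : ℕ) < (m'' : ℕ) := hc
            have : m'' ∈ T := by
              simp only [hT, Finset.mem_filter, Finset.mem_univ, true_and]
              exact ⟨hcc, by omega, h2⟩
            have := hm'min m'' this
            omega
          show π (mpos P i π ((m' : ℕ) - 1)) = v
          rw [hmeq, hm]
          simp
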